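/- As a consequence, the one-step-ahead predictive probability is consistent: under the hypotheses above, |P*(z_{n+1}=1 | z₁,…,zₙ) − Q(z_{n+1}=1 | z₁,…,zₙ)| → 0 in P*-probability. -/

import Mathlib

open MeasureTheory Filter

variable {α : Type*} {m m0 : MeasurableSpace α} {μ : Measure α}

lemma aux_abs_condExp {f : α → ℝ} (hf : Integrable f μ) :
    ∀ᵐ x ∂μ, |(μ[f|m]) x| ≤ (μ[(fun y => |f y|)|m]) x := by
  filter_upwards [condExp_mono hf hf.abs
      (Filter.Eventually.of_forall fun x => le_abs_self (f x)),
    EventuallyLE.trans (condExp_neg f m).symm.le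
      (condExp_mono hf.neg hf.abs
        (Filter.Eventually.of_forall fun x => neg_le_abs (f x)))] with x h1 h2
  simp only [Pi.neg_apply] at h2
  exact abs_le.2 ⟨by linarith, h1⟩

/-- Key identity: `P[h|m] * Q[Δ|m] = Q[h*Δ|m]` Q-a.e., where `Δ = dP/dQ`. -/
lemma aux_key_identity (hm : m ≤ m0) (P : Measure α) {Q : Measure α}
    [IsProbabilityMeasure P] [IsProbabilityMeasure Q]
    (habs : P ≪ Q) {h Δ : α → ℝ}
    (hΔ : Δ =ᵐ[Q] fun z => (P.rnDeriv Q z).toReal)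
    (hΔint : Integrable Δ Q)
    (hhm : Measurable h) (hh1 : ∀ z, |h z| ≤ 1) :
    (fun z => (P[h|m]) z * (Q[Δ|m]) z) =ᵐ[Q] Q[(fun z => h z * Δ z)|m] := by
  haveI : IsFiniteMeasure (Q.trim hm) := isFiniteMeasure_trim hm
  haveI : IsFiniteMeasure (P.trim hm) := isFiniteMeasure_trim hm
  have hintP : ∀ {g : α → ℝ}, Measurable g → (∀ z, |g z| ≤ 1) → Integrable g P := by
    intro g hg hgb
    exact (integrable_const (1 : ℝ)).mono' hg.aestronglyMeasurable
      (Filter.Eventually.of_forall fun z => by simpa using hgb z)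
  have hinth : Integrable h P := hintP hhm hh1
  have hinthΔ : Integrable (fun z => h z * Δ z) Q := by
    refine hΔint.abs.mono' (hhm.aestronglyMeasurable.mul hΔint.1)
      (Filter.Eventually.of_forall fun z => ?_)
    rw [Real.norm_eq_abs, abs_mul]
    exact mul_le_of_le_one_left (abs_nonneg _) (hh1 z)
  set g₀ : α → ℝ := P[h|m] with hg₀
  have hg₀m : StronglyMeasurable[m] g₀ := stronglyMeasurable_condExp
  have hg₀P : Integrable g₀ P := integrable_condExp
  -- g₀ * Δ is Q-integrable
  have hsmul : (fun z => g₀ z * Δ z) =ᵐ[Q] fun z => (P.rnDeriv Q z).toReal • g₀ z := by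
    filter_upwards [hΔ] with z hz
    simp [hz, mul_comm]
  have hg₀Δint : Integrable (fun z => g₀ z * Δ z) Q :=
    (Integrable.congr ((integrable_rnDeriv_smul_iff habs).2 hg₀P) hsmul.symm)
  -- pull-out property
  have step2 : Q[(fun z => g₀ z * Δ z)|m] =ᵐ[Q] fun z => g₀ z * (Q[Δ|m]) z := by
    have := condExp_mul_of_stronglyMeasurable_left (μ := Q) hg₀m hg₀Δint hΔint
    exact this
  -- set integrals agree
  have step3 : ∀ s : Set α, MeasurableSet[m] s →
      ∫ x in s, g₀ x * Δ x ∂Q = ∫ x in s, h x * Δ x ∂Q := by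
    intro s hs
    have hs0 : MeasurableSet s := hm s hs
    have e1 : ∫ x in s, g₀ x * Δ x ∂Q
        = ∫ x in s, (P.rnDeriv Q x).toReal • g₀ x ∂Q :=
      setIntegral_congr_ae hs0 (hsmul.mono fun x hx _ => hx)
    have e2 : ∫ x in s, (P.rnDeriv Q x).toReal • g₀ x ∂Q = ∫ x in s, g₀ x ∂P :=
      setIntegral_rnDeriv_smul habs hs0
    have e3 : ∫ x in s, g₀ x ∂P = ∫ x in s, h x ∂P := setIntegral_condExp hm hinth hs
    have e4 : ∫ x in s, h x ∂P = ∫ x in s, (P.rnDeriv Q x).toReal • h x ∂Q :=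
      (setIntegral_rnDeriv_smul habs hs0).symm
    have e5 : ∫ x in s, (P.rnDeriv Q x).toReal • h x ∂Q = ∫ x in s, h x * Δ x ∂Q := by
      refine setIntegral_congr_ae hs0 ?_
      filter_upwards [hΔ] with z hz _
      simp [hz, mul_comm]
    rw [e1, e2, e3, e4, e5]
  have hgint : Integrable (fun z => g₀ z * (Q[Δ|m]) z) Q := integrable_condExp.congr step2
  have hgm : AEStronglyMeasurable[m] (fun z => g₀ z * (Q[Δ|m]) z) Q :=
    (hg₀m.mul stronglyMeasurable_condExp).aestronglyMeasurable
  refine ae_eq_condExp_of_forall_setIntegral_eq hm hinthΔ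
    (fun s _ _ => hgint.integrableOn) (fun s hs _ => ?_) hgm
  have e0 : ∫ x in s, g₀ x * (Q[Δ|m]) x ∂Q = ∫ x in s, (Q[(fun z => g₀ z * Δ z)|m]) x ∂Q :=
    setIntegral_congr_ae (hm s hs) (step2.symm.mono fun x hx _ => hx)
  rw [e0, setIntegral_condExp hm hg₀Δint hs, step3 s hs]

/-- Key inequality: `|P[h|m] - Q[h|m]| * Q[Δ|m] ≤ Q[|Δ - Q[Δ|m]| | m]` Q-a.e. -/
lemma aux_key_ineq (hm : m ≤ m0) (P : Measure α) {Q : Measure α}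
    [IsProbabilityMeasure P] [IsProbabilityMeasure Q]
    (habs : P ≪ Q) {h Δ : α → ℝ}
    (hΔ : Δ =ᵐ[Q] fun z => (P.rnDeriv Q z).toReal)
    (hΔint : Integrable Δ Q)
    (hhm : Measurable h) (hh0 : ∀ z, 0 ≤ h z) (hh1 : ∀ z, h z ≤ 1) :
    ∀ᵐ z ∂Q, |(P[h|m]) z - (Q[h|m]) z| * (Q[Δ|m]) z
      ≤ (Q[(fun y => |Δ y - (Q[Δ|m]) y|)|m]) z := by
  haveI : IsFiniteMeasure (Q.trim hm) := isFiniteMeasure_trim hm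
  haveI : IsFiniteMeasure (P.trim hm) := isFiniteMeasure_trim hm
  have hh1' : ∀ z, |h z| ≤ 1 := fun z => by rw [abs_of_nonneg (hh0 z)]; exact hh1 z
  set D : α → ℝ := Q[Δ|m] with hD
  have hDm : StronglyMeasurable[m] D := stronglyMeasurable_condExp
  have hDint : Integrable D Q := integrable_condExp
  have hDnn : 0 ≤ᵐ[Q] D := by
    refine condExp_nonneg ?_
    filter_upwards [hΔ] with z hz
    rw [hz]; positivity
  have hinthQ : Integrable h Q :=
    (integrable_const (1 : ℝ)).mono' hhm.aestronglyMeasurable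
      (Filter.Eventually.of_forall fun z => by simpa using hh1' z)
  have hinthΔ : Integrable (fun z => h z * Δ z) Q := by
    refine hΔint.abs.mono' (hhm.aestronglyMeasurable.mul hΔint.1)
      (Filter.Eventually.of_forall fun z => ?_)
    rw [Real.norm_eq_abs, abs_mul]
    exact mul_le_of_le_one_left (abs_nonneg _) (hh1' z)
  have hintDh : Integrable (fun z => D z * h z) Q := by
    refine hDint.abs.mono' ((hDm.mono hm).aestronglyMeasurable.mul hhm.aestronglyMeasurable)
      (Filter.Eventually.of_forall fun z => ?_)
    rw [Real.norm_eq_abs, abs_mul]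
    exact mul_le_of_le_one_right (abs_nonneg _) (hh1' z)
  have key1 := aux_key_identity hm P habs hΔ hΔint hhm hh1'
  have key2 : Q[(fun z => D z * h z)|m] =ᵐ[Q] fun z => D z * (Q[h|m]) z :=
    condExp_mul_of_stronglyMeasurable_left hDm hintDh hinthQ
  have key3 : Q[(fun z => h z * Δ z)|m] - Q[(fun z => D z * h z)|m]
      =ᵐ[Q] Q[(fun z => h z * Δ z - D z * h z)|m] :=
    (condExp_sub hinthΔ hintDh m).symm
  have key4 := aux_abs_condExp (m := m) (f := fun z => h z * Δ z - D z * h z)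
    (hinthΔ.sub hintDh)
  have key5 : Q[(fun y => |h y * Δ y - D y * h y|)|m]
      ≤ᵐ[Q] Q[(fun y => |Δ y - D y|)|m] := by
    refine condExp_mono (hinthΔ.sub hintDh).abs (hΔint.sub hDint).abs
      (Filter.Eventually.of_forall fun z => ?_)
    show |h z * Δ z - D z * h z| ≤ |Δ z - D z|
    rw [show h z * Δ z - D z * h z = h z * (Δ z - D z) from by ring, abs_mul,
      abs_of_nonneg (hh0 z)]
    exact mul_le_of_le_one_left (abs_nonneg _) (hh1 z)
  filter_upwards [key1, key2, key3, key4, key5, hDnn] with z e1 e2 e3 e4 e5 hD0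
  rw [Pi.zero_apply] at hD0
  have estep : |(P[h|m]) z - (Q[h|m]) z| * D z
      = |(P[h|m]) z * D z - D z * (Q[h|m]) z| := by
    rw [congrArg abs (show (P[h|m]) z * D z - D z * (Q[h|m]) z
        = ((P[h|m]) z - (Q[h|m]) z) * D z from by ring), abs_mul, abs_of_nonneg hD0]
  rw [estep, e1, ← e2]
  calc |(Q[(fun z => h z * Δ z)|m]) z - (Q[(fun z => D z * h z)|m]) z|
      = |(Q[(fun z => h z * Δ z - D z * h z)|m]) z| := by
        rw [← (show (Q[(fun z => h z * Δ z)|m] - Q[(fun z => D z * h z)|m]) z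
          = (Q[(fun z => h z * Δ z)|m]) z - (Q[(fun z => D z * h z)|m]) z from rfl), e3]
    _ ≤ (Q[(fun y => |h y * Δ y - D y * h y|)|m]) z := e4
    _ ≤ (Q[(fun y => |Δ y - D y|)|m]) z := e5

theorem stmt9
    (Pstar Q : Measure (ℕ → Bool)) [IsProbabilityMeasure Pstar] [IsProbabilityMeasure Q]
    (habs : Pstar ≪ Q)
    (past : (n : ℕ) → (ℕ → Bool) → (Fin n → Bool))
    (hpast : ∀ n z i, past n z i = z i)
    -- Fₙ = σ(z₁,…,zₙ)
    (F : ℕ → MeasurableSpace (ℕ → Bool))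
    (hF : ∀ n, F n = MeasurableSpace.comap (past n) inferInstance)
    -- indicator of the event {z_{n+1} = 1}
    (ind : ℕ → (ℕ → Bool) → ℝ)
    (hind : ∀ n z, ind n z = if z n then 1 else 0)
    -- density and L¹ convergence of the conditional likelihood ratios
    (Δ : (ℕ → Bool) → ℝ) (hΔ : Δ =ᵐ[Q] fun z => (Pstar.rnDeriv Q z).toReal)
    (hΔint : Integrable Δ Q)
    (hL1 : Tendsto (fun n => ∫ z, |(Q[Δ | F n]) z - Δ z| ∂Q) atTop (nhds 0)) :
    TendstoInMeasure Pstar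
      (fun n z => |(Pstar[ind n | F n]) z - (Q[ind n | F n]) z|) atTop (fun _ => (0 : ℝ)) := by
  -- basic measurability facts
  have hm : ∀ n, F n ≤ (inferInstance : MeasurableSpace (ℕ → Bool)) := by
    intro n
    rw [hF n]
    have hp : Measurable (past n) := by
      have : past n = fun z (i : Fin n) => z i := by
        funext z i; exact hpast n z i
      rw [this]
      exact measurable_pi_lambda _ fun i => measurable_pi_apply _
    exact hp.comap_le
  have hindm : ∀ n, Measurable (ind n) := by
    intro n
    have : ind n = fun z => if z n then (1 : ℝ) else 0 := funext (hind n)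
    rw [this]
    have hset : MeasurableSet {z : ℕ → Bool | z n = true} := by
      have he : {z : ℕ → Bool | z n = true} = (fun z : ℕ → Bool => z n) ⁻¹' {true} := rfl
      rw [he]
      exact measurable_pi_apply n (measurableSet_singleton true)
    exact Measurable.ite hset measurable_const measurable_const
  have hind0 : ∀ n z, 0 ≤ ind n z := by
    intro n z; rw [hind n z]; split <;> norm_num
  have hind1 : ∀ n z, ind n z ≤ 1 := by
    intro n z; rw [hind n z]; split <;> norm_num
  -- key a.e. inequality, under Pstar
  set W : (ℕ → Bool) → ℝ := fun z => (Pstar.rnDeriv Q z).toReal with hW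
  have hWm : Measurable W := (Measure.measurable_rnDeriv _ _).ennreal_toReal
  have hintW : Integrable W Q := hΔint.congr hΔ
  have keyP : ∀ n, ∀ᵐ z ∂Pstar,
      |(Pstar[ind n | F n]) z - (Q[ind n | F n]) z| * (Q[Δ|F n]) z
        ≤ (Q[(fun y => |Δ y - (Q[Δ|F n]) y|)|F n]) z :=
    fun n => (aux_key_ineq (hm n) Pstar habs hΔ hΔint (hindm n) (hind0 n)
      (hind1 n)).filter_mono habs.ae_le
  have hDnnP : ∀ n, ∀ᵐ z ∂Pstar, 0 ≤ (Q[Δ|F n]) z := by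
    intro n
    refine Eventually.filter_mono habs.ae_le ?_
    filter_upwards [condExp_nonneg (m := F n) (μ := Q)
      (f := Δ) (by filter_upwards [hΔ] with z hz; rw [hz]; positivity)] with z hz
    simpa using hz
  -- absolute continuity, quantitative
  rw [tendstoInMeasure_iff_dist]
  intro ε hε
  simp only [dist_zero_right, Real.norm_eq_abs, abs_abs]
  rw [ENNReal.tendsto_atTop_zero]
  intro η hη
  obtain ⟨r, hr, hrη⟩ : ∃ r : ℝ, 0 < r ∧ ENNReal.ofReal r ≤ η := by
    rcases eq_or_ne η ⊤ with h | h
    · exact ⟨1, one_pos, by simp [h]⟩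
    · exact ⟨η.toReal, ENNReal.toReal_pos hη.ne' h, by rw [ENNReal.ofReal_toReal h]⟩
  haveI : Pstar.HaveLebesgueDecomposition Q := Measure.haveLebesgueDecomposition_of_finiteMeasure
  have hfin : ∫⁻ x, Pstar.rnDeriv Q x ∂Q ≠ ⊤ := by
    rw [Measure.lintegral_rnDeriv habs]
    exact measure_ne_top _ _
  obtain ⟨γ, hγ0, hACγ⟩ := exists_pos_setLIntegral_lt_of_measure_lt (μ := Q) hfin
    (ε := ENNReal.ofReal (r / 3)) (ne_of_gt (ENNReal.ofReal_pos.2 (by linarith)))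
  have hAC : ∀ s : Set (ℕ → Bool), Q s < γ → Pstar s < ENNReal.ofReal (r / 3) := by
    intro s hs
    rw [← Measure.setLIntegral_rnDeriv habs s]
    exact hACγ s hs
  set γ' : ENNReal := min γ 1 with hγ'
  have hγ'top : γ' ≠ ⊤ := ne_top_of_le_ne_top ENNReal.one_ne_top (min_le_right _ _)
  have hγ'pos : 0 < γ'.toReal :=
    ENNReal.toReal_pos (lt_min hγ0 zero_lt_one).ne' hγ'top
  set δ : ℝ := r / 6 with hδ
  have hδ0 : 0 < δ := by positivity
  -- choose N from L¹ convergence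
  have hc0 : 0 < min δ (ε * δ) * γ'.toReal := by
    have : 0 < min δ (ε * δ) := lt_min hδ0 (by positivity)
    positivity
  obtain ⟨N, hN⟩ := (Filter.eventually_atTop).1
    (hL1.eventually_lt_const hc0)
  refine ⟨N, fun n hn => ?_⟩
  -- notation for this n
  set D : (ℕ → Bool) → ℝ := Q[Δ|F n] with hDdef
  set G : (ℕ → Bool) → ℝ := Q[(fun y => |Δ y - D y|)|F n] with hGdef
  have hDSM : StronglyMeasurable D := stronglyMeasurable_condExp.mono (hm n)
  have hGSM : StronglyMeasurable G := stronglyMeasurable_condExp.mono (hm n)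
  have hDint : Integrable D Q := integrable_condExp
  have habsdiff_int : Integrable (fun y => |Δ y - D y|) Q := (hΔint.sub hDint).abs
  have hIlt : ∫ z, |D z - Δ z| ∂Q < min δ (ε * δ) * γ'.toReal := hN n hn
  have hIeq : ∫ z, |Δ z - D z| ∂Q = ∫ z, |D z - Δ z| ∂Q := by
    simp_rw [abs_sub_comm]
  have hIeqW : ∫ z, |D z - W z| ∂Q = ∫ z, |D z - Δ z| ∂Q := by
    refine integral_congr_ae ?_
    filter_upwards [hΔ] with z hz
    rw [hz]
  -- the sets
  set S : Set (ℕ → Bool) :=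
    {x | ε ≤ |(Pstar[ind n | F n]) x - (Q[ind n | F n]) x|} with hS
  set sD : Set (ℕ → Bool) := {x | D x ≤ δ} with hsD
  set s0 : Set (ℕ → Bool) := {x | W x ≤ 2 * δ} with hs0
  set s1 : Set (ℕ → Bool) := {x | δ ≤ |D x - W x|} with hs1
  set s2 : Set (ℕ → Bool) := {x | ε * δ ≤ G x} with hs2
  have hs0meas : MeasurableSet s0 := measurableSet_le hWm measurable_const
  have hs1meas : MeasurableSet s1 :=
    measurableSet_le measurable_const ((hDSM.measurable.sub hWm).abs)
  have hs2meas : MeasurableSet s2 := measurableSet_le measurable_const hGSM.measurable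
  -- step 1 : S ⊆ᵐ sD ∪ s2
  have incl1 : Pstar S ≤ Pstar sD + Pstar s2 := by
    refine le_trans (measure_mono_ae ?_) (measure_union_le _ _)
    filter_upwards [keyP n, hDnnP n] with z hkey hD0
    intro hzS
    by_cases hD : D z ≤ δ
    · exact Or.inl hD
    · push_neg at hD
      refine Or.inr ?_
      have h1 : ε * δ ≤ ε * D z := by
        have := hD.le
        nlinarith
      have h2 : ε * D z ≤ |(Pstar[ind n | F n]) z - (Q[ind n | F n]) z| * D z := by
        have hzS' : ε ≤ |(Pstar[ind n | F n]) z - (Q[ind n | F n]) z| := hzS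
        nlinarith
      exact le_trans h1 (le_trans h2 hkey)
  -- step 2 : sD ⊆ s0 ∪ s1
  have incl2 : Pstar sD ≤ Pstar s0 + Pstar s1 := by
    refine le_trans (measure_mono ?_) (measure_union_le _ _)
    intro z hz
    by_cases h1 : δ ≤ |D z - W z|
    · exact Or.inr h1
    · push_neg at h1
      left
      have : |D z - W z| < δ := h1
      have h2 : D z ≤ δ := hz
      have := abs_lt.1 this
      show W z ≤ 2 * δ
      linarith [this.1, this.2]
  -- bound on s0
  have hb0 : Pstar s0 ≤ ENNReal.ofReal (r / 3) := by
    have hint : (Pstar s0).toReal = ∫ x in s0, W x ∂Q :=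
      (Measure.setIntegral_toReal_rnDeriv habs s0).symm
    have hle : ∫ x in s0, W x ∂Q ≤ 2 * δ := by
      calc ∫ x in s0, W x ∂Q ≤ ∫ x in s0, (2 * δ) ∂Q := by
            refine setIntegral_mono_on hintW.integrableOn integrableOn_const
              hs0meas (fun x hx => hx)
        _ = (Q s0).toReal * (2 * δ) := by rw [setIntegral_const]; simp [smul_eq_mul, measureReal_def]
        _ ≤ 1 * (2 * δ) := by
            refine mul_le_mul_of_nonneg_right ?_ (by positivity)
            exact ENNReal.toReal_le_of_le_ofReal one_pos.le (by simpa using prob_le_one)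
        _ = 2 * δ := one_mul _
    calc Pstar s0 = ENNReal.ofReal (Pstar s0).toReal :=
          (ENNReal.ofReal_toReal (measure_ne_top _ _)).symm
      _ ≤ ENNReal.ofReal (2 * δ) := ENNReal.ofReal_le_ofReal (by rw [hint]; exact hle)
      _ = ENNReal.ofReal (r / 3) := by rw [hδ]; congr 1; ring
  -- bound on s1 (Markov)
  have hb1 : Pstar s1 < ENNReal.ofReal (r / 3) := by
    refine hAC s1 (lt_of_lt_of_le ?_ (min_le_left γ 1))
    rw [← ENNReal.toReal_lt_toReal (measure_ne_top _ _) hγ'top]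
    have hmark := mul_meas_ge_le_integral_of_nonneg (μ := Q)
      (f := fun x => |D x - W x|) (Filter.Eventually.of_forall fun x => abs_nonneg _)
      (hDint.sub hintW).abs δ
    have hstep : δ * (Q s1).toReal ≤ ∫ z, |D z - Δ z| ∂Q := by
      rw [← hIeqW]; exact hmark
    have h2 : δ * (Q s1).toReal < δ * γ'.toReal := by
      calc δ * (Q s1).toReal ≤ ∫ z, |D z - Δ z| ∂Q := hstep
        _ < min δ (ε * δ) * γ'.toReal := hIlt
        _ ≤ δ * γ'.toReal := mul_le_mul_of_nonneg_right (min_le_left _ _) hγ'pos.le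
    exact lt_of_mul_lt_mul_left h2 hδ0.le
  -- bound on s2 (Markov)
  have hb2 : Pstar s2 < ENNReal.ofReal (r / 3) := by
    refine hAC s2 (lt_of_lt_of_le ?_ (min_le_left γ 1))
    rw [← ENNReal.toReal_lt_toReal (measure_ne_top _ _) hγ'top]
    have hGnn : 0 ≤ᵐ[Q] G := condExp_nonneg
      (Filter.Eventually.of_forall fun z => abs_nonneg _)
    have hGint : Integrable G Q := integrable_condExp
    have hmark := mul_meas_ge_le_integral_of_nonneg (μ := Q)
      (f := G) hGnn hGint (ε * δ)
    haveI : IsFiniteMeasure (Q.trim (hm n)) := isFiniteMeasure_trim _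
    have hGint_eq : ∫ z, G z ∂Q = ∫ z, |Δ z - D z| ∂Q :=
      integral_condExp (hm n)
    have h2 : (ε * δ) * (Q s2).toReal < (ε * δ) * γ'.toReal := by
      calc (ε * δ) * (Q s2).toReal ≤ ∫ z, G z ∂Q := hmark
        _ = ∫ z, |D z - Δ z| ∂Q := by rw [hGint_eq, hIeq]
        _ < min δ (ε * δ) * γ'.toReal := hIlt
        _ ≤ (ε * δ) * γ'.toReal :=
            mul_le_mul_of_nonneg_right (min_le_right _ _) hγ'pos.le
    exact lt_of_mul_lt_mul_left h2 (by positivity)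
  -- put it together
  calc Pstar S ≤ Pstar sD + Pstar s2 := incl1
    _ ≤ (Pstar s0 + Pstar s1) + Pstar s2 := add_le_add incl2 le_rfl
    _ ≤ (ENNReal.ofReal (r / 3) + ENNReal.ofReal (r / 3)) + ENNReal.ofReal (r / 3) :=
        add_le_add (add_le_add hb0 hb1.le) hb2.le
    _ = ENNReal.ofReal (r / 3 + r / 3 + r / 3) := by
        rw [ENNReal.ofReal_add (by positivity) (by positivity),
          ENNReal.ofReal_add (by positivity) (by positivity)]
    _ = ENNReal.ofReal r := by congr 1; ring
    _ ≤ η := hrη
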